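/- In the interpolating linear regime (there exists w ∈ ℝ^m with y_i = x_iᵀw for all i ≥ 1), if 0 < η and η‖x_i‖² < 2 − δ for all i for some fixed δ > 0, then the SGD innovations e_i := y_i − x_iᵀw_{i−1} satisfy η Σ_{i=1}^∞ (2 − η‖x_i‖²) e_i² ≤ ‖w − w_0‖²; in particular Σ_{i=1}^∞ e_i² < ∞ and e_i → 0 as i → ∞. -/

import Mathlib

open scoped RealInnerProductSpace

/-- in the interpolating linear regime with step size bounded away from
`2/‖x_i‖²`, the SGD innovations are square-summable and vanish. -/
theorem stmt_5 {m : ℕ} (x : ℕ → EuclideanSpace ℝ (Fin m)) (y : ℕ → ℝ)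
    (wstar : EuclideanSpace ℝ (Fin m))
    (hdata : ∀ i : ℕ, y (i + 1) = ⟪x (i + 1), wstar⟫)
    (η : ℝ) (hη : 0 < η)
    (δ : ℝ) (hδ : 0 < δ)
    (hstep : ∀ i : ℕ, η * ‖x (i + 1)‖ ^ 2 < 2 - δ)
    (w₀ : EuclideanSpace ℝ (Fin m))
    (w : ℕ → EuclideanSpace ℝ (Fin m)) (hw0 : w 0 = w₀)
    (hupd : ∀ i : ℕ,
      w (i + 1) = w i + (η * (y (i + 1) - ⟪x (i + 1), w i⟫)) • x (i + 1)) :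
    η * ∑' i : ℕ, (2 - η * ‖x (i + 1)‖ ^ 2) * (y (i + 1) - ⟪x (i + 1), w i⟫) ^ 2
        ≤ ‖wstar - w₀‖ ^ 2 ∧
    Summable (fun i : ℕ => (y (i + 1) - ⟪x (i + 1), w i⟫) ^ 2) ∧
    Filter.Tendsto (fun i : ℕ => y (i + 1) - ⟪x (i + 1), w i⟫)
      Filter.atTop (nhds 0) := by
  set e : ℕ → ℝ := fun i => y (i + 1) - ⟪x (i + 1), w i⟫ with he
  set f : ℕ → ℝ := fun i => (2 - η * ‖x (i + 1)‖ ^ 2) * e i ^ 2 with hf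
  -- e i = ⟪x (i+1), wstar - w i⟫
  have hei : ∀ i, e i = ⟪x (i + 1), wstar - w i⟫ := by
    intro i
    simp [he, hdata i, inner_sub_right]
  -- one-step descent identity
  have key : ∀ i, ‖wstar - w (i + 1)‖ ^ 2 = ‖wstar - w i‖ ^ 2 - η * f i := by
    intro i
    have h1 : wstar - w (i + 1) = (wstar - w i) - (η * e i) • x (i + 1) := by
      rw [hupd i]; abel
    rw [h1, norm_sub_sq_real, real_inner_smul_right, norm_smul, real_inner_comm,
      ← hei i]
    have hx : ‖(η * e i)‖ ^ 2 = (η * e i) ^ 2 := sq_abs _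
    rw [mul_pow, hx]
    ring
  -- telescoping partial sums
  have tel : ∀ n, η * ∑ i ∈ Finset.range n, f i
      = ‖wstar - w₀‖ ^ 2 - ‖wstar - w n‖ ^ 2 := by
    intro n
    induction n with
    | zero => simp [hw0]
    | succ n ih =>
      rw [Finset.sum_range_succ, mul_add, ih, key n]; ring
  have hpos : ∀ i, 0 < 2 - η * ‖x (i + 1)‖ ^ 2 := fun i => by
    have := hstep i; linarith
  have hfnn : ∀ i, 0 ≤ f i := fun i => mul_nonneg (hpos i).le (sq_nonneg _)
  have hbd : ∀ n, ∑ i ∈ Finset.range n, f i ≤ ‖wstar - w₀‖ ^ 2 / η := by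
    intro n
    rw [le_div_iff₀ hη, mul_comm]
    have := tel n
    nlinarith [sq_nonneg ‖wstar - w n‖]
  have hsumf : Summable f :=
    summable_of_sum_range_le hfnn hbd
  have htsum : η * ∑' i, f i ≤ ‖wstar - w₀‖ ^ 2 := by
    have := Summable.tsum_le_of_sum_range_le hsumf hbd
    calc η * ∑' i, f i ≤ η * (‖wstar - w₀‖ ^ 2 / η) := by
          exact mul_le_mul_of_nonneg_left this hη.le
      _ = ‖wstar - w₀‖ ^ 2 := by field_simp
  have hsume : Summable (fun i => e i ^ 2) := by
    apply Summable.of_nonneg_of_le (fun i => sq_nonneg _) _ (hsumf.mul_left δ⁻¹)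
    intro i
    have : δ * e i ^ 2 ≤ f i := by
      have h := hstep i
      have hfi : f i = (2 - η * ‖x (i + 1)‖ ^ 2) * e i ^ 2 := rfl
      nlinarith [sq_nonneg (e i)]
    rw [← inv_mul_cancel_left₀ hδ.ne' (e i ^ 2)]
    exact mul_le_mul_of_nonneg_left this (inv_nonneg.2 hδ.le)
  refine ⟨htsum, hsume, ?_⟩
  have h2 : Filter.Tendsto (fun i => e i ^ 2) Filter.atTop (nhds 0) :=
    hsume.tendsto_atTop_zero
  rw [tendsto_zero_iff_norm_tendsto_zero]
  have : (fun i => ‖e i‖) = fun i => Real.sqrt (e i ^ 2) := by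
    funext i; rw [Real.sqrt_sq_eq_abs]; rfl
  rw [this]
  have := (Real.continuous_sqrt.tendsto 0).comp h2
  simpa [Function.comp_def] using this
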